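/- Suppose λ, ν are C¹ on {1 ≤ u ≤ v} with λ(u,u) = −ν(u,u), |∂_u λ(u,v)| ≤ C (1+|u|)^{-1}(1+v)^{-1}, and |ν(u,u) + 1/2| ≤ C (1+|u|)^{-1}. Then |λ(u,v) − 1/2| ≤ C' ( (1+v)^{-1} + log(1+v)/(1+v) ) for all (u,v) with 1 ≤ u ≤ v; in particular lim_{v→∞} λ(u,v) = 1/2 for each u. -/

import Mathlib

open Filter Topology

/-- If `λ(u,u) = −ν(u,u)`, `|∂_u λ| ≤ C(1+|u|)⁻¹(1+v)⁻¹` and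
`|ν(u,u) + 1/2| ≤ C(1+|u|)⁻¹`, then
`|λ(u,v) − 1/2| ≤ C'((1+v)⁻¹ + log(1+v)/(1+v))` on `{1 ≤ u ≤ v}`;
in particular `λ(u,v) → 1/2` as `v → ∞` for each `u`. -/
theorem lambda_limit (C : ℝ) (hC : 0 ≤ C) (lam nu dlam : ℝ → ℝ → ℝ)
    (haxis : ∀ u : ℝ, 1 ≤ u → lam u u = - nu u u)
    (hderiv : ∀ u v : ℝ, 1 ≤ u → u ≤ v →
      HasDerivAt (fun u' => lam u' v) (dlam u v) u)
    (hdb : ∀ u v : ℝ, 1 ≤ u → u ≤ v →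
      |dlam u v| ≤ C * (1 + |u|)⁻¹ * (1 + v)⁻¹)
    (hnu : ∀ u : ℝ, 1 ≤ u → |nu u u + 1/2| ≤ C * (1 + |u|)⁻¹) :
    ∃ C' > 0,
      (∀ u v : ℝ, 1 ≤ u → u ≤ v →
        |lam u v - 1/2| ≤ C' * ((1 + v)⁻¹ + Real.log (1 + v) / (1 + v))) ∧
      ∀ u : ℝ, 1 ≤ u → Tendsto (fun v => lam u v) atTop (𝓝 (1/2)) := by
  have key : ∀ u v : ℝ, 1 ≤ u → u ≤ v →
      |lam u v - 1/2| ≤ (C + 1) * ((1 + v)⁻¹ + Real.log (1 + v) / (1 + v)) := by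
    intro u v hu huv
    have hv : (1:ℝ) ≤ v := hu.trans huv
    have hv0 : (0:ℝ) < 1 + v := by linarith
    -- integrability of dlam(·, v) on [u, v]
    have hint : IntervalIntegrable (fun s => dlam s v) MeasureTheory.volume u v := by
      rw [intervalIntegrable_iff_integrableOn_Ioc_of_le huv]
      have hmeas : MeasureTheory.AEStronglyMeasurable (fun s => dlam s v)
          (MeasureTheory.volume.restrict (Set.Ioc u v)) := by
        refine (measurable_deriv (fun u' => lam u' v)).aestronglyMeasurable.congr ?_
        refine (MeasureTheory.ae_restrict_iff' measurableSet_Ioc).2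
          (Filter.Eventually.of_forall ?_)
        intro s hs
        exact (hderiv s v (hu.trans hs.1.le) hs.2).deriv
      refine MeasureTheory.Integrable.mono' (g := fun _ => C)
        (MeasureTheory.integrableOn_const measure_Ioc_lt_top.ne) hmeas ?_
      refine (MeasureTheory.ae_restrict_iff' measurableSet_Ioc).2
        (Filter.Eventually.of_forall ?_)
      intro s hs
      have h1 : (1:ℝ) ≤ s := hu.trans hs.1.le
      have hb := hdb s v h1 hs.2
      have e1 : (1 + |s|)⁻¹ ≤ 1 := by
        rw [inv_le_one_iff₀]; right; linarith [abs_nonneg s]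
      have e2 : (1 + v)⁻¹ ≤ 1 := by
        rw [inv_le_one_iff₀]; right; linarith
      have e3 : (0:ℝ) ≤ (1 + |s|)⁻¹ := by positivity
      have e4 : (0:ℝ) ≤ (1 + v)⁻¹ := by positivity
      have : C * (1 + |s|)⁻¹ * (1 + v)⁻¹ ≤ C := by nlinarith [mul_le_mul e1 e2 e4 zero_le_one]
      simpa [Real.norm_eq_abs] using hb.trans this
    -- FTC
    have hFTC : ∫ s in u..v, dlam s v = lam v v - lam u v :=
      intervalIntegral.integral_eq_sub_of_hasDerivAt (fun s hs => by
        rw [Set.uIcc_of_le huv] at hs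
        exact hderiv s v (hu.trans hs.1) hs.2) hint
    -- integrability of the bound
    have hcont : ContinuousOn (fun s : ℝ => C * (1 + v)⁻¹ * (1 + s)⁻¹) (Set.uIcc u v) := by
      refine ContinuousOn.mul continuousOn_const ?_
      refine ContinuousOn.inv₀ (by fun_prop) ?_
      intro s hs
      rw [Set.uIcc_of_le huv] at hs
      have : (1:ℝ) ≤ s := hu.trans hs.1
      positivity
    have hintg : IntervalIntegrable (fun s : ℝ => C * (1 + v)⁻¹ * (1 + s)⁻¹)
        MeasureTheory.volume u v := hcont.intervalIntegrable
    -- log integral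
    have hlog : ∫ s in u..v, C * (1 + v)⁻¹ * (1 + s)⁻¹
        = C * (1 + v)⁻¹ * (Real.log (1 + v) - Real.log (1 + u)) := by
      rw [intervalIntegral.integral_const_mul]
      congr 1
      have : ∫ s in u..v, (1 + s)⁻¹
          = Real.log (1 + v) - Real.log (1 + u) := by
        have hcont' : ContinuousOn (fun s : ℝ => (1 + s)⁻¹) (Set.uIcc u v) := by
          refine ContinuousOn.inv₀ (by fun_prop) ?_
          intro s hs
          rw [Set.uIcc_of_le huv] at hs
          have : (1:ℝ) ≤ s := hu.trans hs.1
          positivity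
        refine intervalIntegral.integral_eq_sub_of_hasDerivAt
          (f := fun t : ℝ => Real.log (1 + t)) (fun s hs => ?_)
          hcont'.intervalIntegrable
        rw [Set.uIcc_of_le huv] at hs
        have h1 : (0:ℝ) < 1 + s := by have := hu.trans hs.1; linarith
        have := (Real.hasDerivAt_log h1.ne').comp s ((hasDerivAt_id s).const_add 1)
        simpa [Function.comp_def] using this
      rw [this]
    -- bound on the integral
    have habs : |∫ s in u..v, dlam s v| ≤ ∫ s in u..v, C * (1 + v)⁻¹ * (1 + s)⁻¹ := by
      refine (intervalIntegral.abs_integral_le_integral_abs huv).trans ?_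
      refine intervalIntegral.integral_mono_on huv hint.abs hintg (fun s hs => ?_)
      have h1 : (1:ℝ) ≤ s := hu.trans hs.1
      have habs' : |s| = s := abs_of_nonneg (by linarith)
      have := hdb s v h1 hs.2
      rw [habs'] at this
      calc |dlam s v| ≤ C * (1 + s)⁻¹ * (1 + v)⁻¹ := this
        _ = C * (1 + v)⁻¹ * (1 + s)⁻¹ := by ring
    -- bound on lam v v
    have hdiag : |lam v v - 1/2| ≤ C * (1 + v)⁻¹ := by
      have := hnu v hv
      rw [haxis v hv]
      rw [abs_of_nonneg (by linarith : (0:ℝ) ≤ v)] at this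
      calc |-nu v v - 1/2| = |nu v v + 1/2| := by rw [abs_sub_comm]; ring_nf
        _ ≤ C * (1 + v)⁻¹ := this
    -- combine
    have hlogu : 0 ≤ Real.log (1 + u) := Real.log_nonneg (by linarith)
    have hlogv : 0 ≤ Real.log (1 + v) := Real.log_nonneg (by linarith)
    have hmain : |lam u v - 1/2| ≤ C * ((1 + v)⁻¹ + Real.log (1 + v) / (1 + v)) := by
      have h1 : |lam u v - lam v v| ≤ C * (1 + v)⁻¹ * Real.log (1 + v) := by
        have : |lam u v - lam v v| = |∫ s in u..v, dlam s v| := by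
          rw [hFTC, abs_sub_comm]
        rw [this]
        refine habs.trans ?_
        rw [hlog]
        have hCv : 0 ≤ C * (1 + v)⁻¹ := by positivity
        nlinarith
      calc |lam u v - 1/2| ≤ |lam u v - lam v v| + |lam v v - 1/2| := by
            have := abs_sub_le (lam u v) (lam v v) (1/2); linarith
        _ ≤ C * (1 + v)⁻¹ * Real.log (1 + v) + C * (1 + v)⁻¹ := by linarith
        _ = C * ((1 + v)⁻¹ + Real.log (1 + v) / (1 + v)) := by
            field_simp; ring
    have hpos : 0 ≤ (1 + v)⁻¹ + Real.log (1 + v) / (1 + v) := by positivity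
    nlinarith
  refine ⟨C + 1, by linarith, key, ?_⟩
  intro u hu
  have h1 : Tendsto (fun v : ℝ => (1 + v)) atTop atTop :=
    tendsto_atTop_add_const_left _ 1 tendsto_id
  have h2 : Tendsto (fun v : ℝ => (1 + v)⁻¹) atTop (𝓝 0) := h1.inv_tendsto_atTop
  have h3 : Tendsto (fun v : ℝ => Real.log (1 + v) / (1 + v)) atTop (𝓝 0) :=
    (Real.isLittleO_log_id_atTop.tendsto_div_nhds_zero).comp h1
  have h0 : Tendsto (fun v : ℝ => (C + 1) * ((1 + v)⁻¹ + Real.log (1 + v) / (1 + v)))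
      atTop (𝓝 0) := by
    simpa using ((h2.add h3).const_mul (C + 1))
  have hz : Tendsto (fun v => lam u v - 1/2) atTop (𝓝 0) := by
    refine squeeze_zero_norm' ?_ h0
    filter_upwards [eventually_ge_atTop u] with v hv
    simpa [Real.norm_eq_abs] using key u v hu hv
  have := hz.add_const (1/2)
  simpa using this
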